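/- Let ψ_1, …, ψ_m (m ≥ 2) be contracting similarities of ℝ with ratios r_1, …, r_m ∈ (0,1) such that the intervals ψ_i([0,1]) ⊆ [0,1] are pairwise disjoint and ordered: 0 = ψ_1(0) < ψ_1(1) < ψ_2(0) < ⋯ < ψ_m(0) < ψ_m(1) = 1, and let F be the attractor, i.e. the unique nonempty compact set with F = ⋃_{i=1}^m ψ_i(F). Then the Hausdorff dimension of F equals s, where s is the unique positive real number satisfying Σ_{i=1}^m r_i^s = 1; moreover lim_{r→0⁺} log L(F_r)/log r = 1 − s, where L is Lebesgue measure and F_r is the closed r-neighbourhood of F (so the Minkowski dimension of F also equals s). -/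

import Mathlib

open MeasureTheory Filter Set
open scoped Classical

noncomputable section

/-- The enlargement `B̄^a` of the interval `[s,t]` by the factor `1+a` about its centre. -/
def enlarge (a s t : ℝ) : Set ℝ :=
  Set.Icc (s - a * (t - s) / 2) (t + a * (t - s) / 2)

/-- The moment sum `Σ_{B ∈ B_r^*} μ(B̄^a)^q` over grid intervals of length `r`
whose interior meets the support of `μ` (i.e. with `μ(B) > 0`). -/
def gridSum (μ : Measure ℝ) (a q R : ℝ) : ℝ :=
  ∑' m : ℤ, if 0 < μ (Set.Icc ((m : ℝ) * R) (((m : ℝ) + 1) * R))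
    then (μ (enlarge a ((m : ℝ) * R) (((m : ℝ) + 1) * R))).toReal ^ q else 0

/-- The coarse multifractal moment function
`β_a(q) = inf{β : limsup_{r→0⁺} r^β Σ_{B ∈ B_r^*} μ(B̄^a)^q = 0}`.
(For the nonnegative quantity `r^β · Σ…`, vanishing of the `limsup` as `r → 0⁺`
is the same as convergence to `0`.) -/
def betaA (μ : Measure ℝ) (a q : ℝ) : ℝ :=
  sInf {β : ℝ | Filter.Tendsto (fun R => R ^ β * gridSum μ a q R)
    (nhdsWithin 0 (Set.Ioi 0)) (nhds 0)}

/-- `F` is a "fractal subset" of `[0,1]`: compact, Lebesgue-null, containing `0` and `1`. -/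
def IsFractalSubset (F : Set ℝ) : Prop :=
  IsCompact F ∧ F ⊆ Set.Icc 0 1 ∧ (0 : ℝ) ∈ F ∧ (1 : ℝ) ∈ F ∧ MeasureTheory.volume F = 0

/-- The complementary intervals `I_n = (l n, r n)` of `F` in `[0,1]`, enumerated with
nonincreasing lengths. -/
structure FractalComplement (F : Set ℝ) where
  l : ℕ → ℝ
  r : ℕ → ℝ
  lt : ∀ n, l n < r n
  disj : Pairwise fun n m => Disjoint (Set.Ioo (l n) (r n)) (Set.Ioo (l m) (r m))
  union : (⋃ n, Set.Ioo (l n) (r n)) = Set.Icc (0 : ℝ) 1 \ F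
  mono : ∀ n, r (n + 1) - l (n + 1) ≤ r n - l n

/-- The length `|I_n|` of the `n`-th complementary interval. -/
def FractalComplement.len {F : Set ℝ} (c : FractalComplement F) (n : ℕ) : ℝ := c.r n - c.l n

/-- The enlargement `Ī_n^a` of the closure of the complementary interval `I_n`. -/
def FractalComplement.I {F : Set ℝ} (c : FractalComplement F) (a : ℝ) (n : ℕ) : Set ℝ :=
  enlarge a (c.l n) (c.r n)

/-- The lacunarity condition with constant `lam`: every interval `[x-r, x+r]` with `x ∈ F`
and `0 < r ≤ 1` contains a complementary interval of length at least `lam * r`. -/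
def Lacunary {F : Set ℝ} (c : FractalComplement F) (lam : ℝ) : Prop :=
  ∀ x ∈ F, ∀ R : ℝ, 0 < R → R ≤ 1 → ∃ n,
    Set.Ioo (c.l n) (c.r n) ⊆ Set.Icc (x - R) (x + R) ∧ lam * R ≤ c.len n

/-- The topological support of `μ` is exactly `F`. -/
def HasSupport (μ : Measure ℝ) (F : Set ℝ) : Prop :=
  μ Fᶜ = 0 ∧ ∀ x ∈ F, ∀ ε : ℝ, 0 < ε → 0 < μ (Set.Ioo (x - ε) (x + ε))

open scoped ENNReal NNReal

namespace Moran

structure Cfg where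
  m : ℕ
  hm : 2 ≤ m
  b : ℕ → ℝ
  r : ℕ → ℝ
  s : ℝ
  F : Set ℝ
  hr0 : ∀ i, i < m → 0 < r i
  hr1 : ∀ i, i < m → r i < 1
  hb0 : ∀ i, i < m → 0 ≤ b i
  hb1 : ∀ i, i < m → b i + r i ≤ 1
  hgap : ∀ i, i + 1 < m → b i + r i < b (i + 1)
  hs : 0 < s
  hsum : ∑ i ∈ Finset.range m, r i ^ s = 1
  hF : IsCompact F
  hFne : F.Nonempty
  hFattr : F = ⋃ i ∈ Finset.range m, (fun x => b i + r i * x) '' F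

namespace Cfg

variable (c : Cfg)

lemma mpos : 0 < c.m := lt_of_lt_of_le two_pos c.hm

lemma range_ne : (Finset.range c.m).Nonempty := Finset.nonempty_range_iff.2 c.mpos.ne'

/-- `p i = r i ^ s`, the mass of the `i`-th piece. -/
def p (i : ℕ) : ℝ := c.r i ^ c.s

lemma p_pos {i : ℕ} (hi : i < c.m) : 0 < c.p i :=
  Real.rpow_pos_of_pos (c.hr0 i hi) _

lemma p_lt_one {i : ℕ} (hi : i < c.m) : c.p i < 1 :=
  Real.rpow_lt_one (c.hr0 i hi).le (c.hr1 i hi) c.hs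

lemma p_sum : ∑ i ∈ Finset.range c.m, c.p i = 1 := c.hsum

/-- maximal contraction ratio -/
def rho : ℝ := (Finset.range c.m).sup' c.range_ne c.r

lemma le_rho {i : ℕ} (hi : i < c.m) : c.r i ≤ c.rho :=
  Finset.le_sup' c.r (Finset.mem_range.2 hi)

lemma rho_pos : 0 < c.rho :=
  lt_of_lt_of_le (c.hr0 0 c.mpos) (c.le_rho c.mpos)

lemma rho_lt_one : c.rho < 1 := by
  obtain ⟨i, hi, hie⟩ := Finset.exists_mem_eq_sup' c.range_ne c.r
  rw [rho, hie]; exact c.hr1 i (Finset.mem_range.1 hi)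

/-- minimal contraction ratio -/
def eps : ℝ := (Finset.range c.m).inf' c.range_ne c.r

lemma eps_le {i : ℕ} (hi : i < c.m) : c.eps ≤ c.r i :=
  Finset.inf'_le c.r (Finset.mem_range.2 hi)

lemma eps_pos : 0 < c.eps := by
  obtain ⟨i, hi, hie⟩ := Finset.exists_mem_eq_inf' c.range_ne c.r
  rw [eps, hie]; exact c.hr0 i (Finset.mem_range.1 hi)

lemma eps_lt_one : c.eps < 1 :=
  lt_of_le_of_lt (c.eps_le c.mpos) (c.hr1 0 c.mpos)

lemma range_pred_ne : (Finset.range (c.m - 1)).Nonempty := by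
  refine Finset.nonempty_range_iff.2 ?_
  have := c.hm; omega

/-- minimal gap length -/
def g : ℝ := (Finset.range (c.m - 1)).inf' c.range_pred_ne
  (fun i => c.b (i + 1) - (c.b i + c.r i))

lemma g_le {i : ℕ} (hi : i + 1 < c.m) : c.g ≤ c.b (i + 1) - (c.b i + c.r i) :=
  Finset.inf'_le _ (Finset.mem_range.2 (by omega))

lemma g_pos : 0 < c.g := by
  obtain ⟨i, hi, hie⟩ := Finset.exists_mem_eq_inf' c.range_pred_ne
    (fun i => c.b (i + 1) - (c.b i + c.r i))
  rw [g, hie]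
  have : i + 1 < c.m := by have := Finset.mem_range.1 hi; omega
  linarith [c.hgap i this]

lemma chain {i j : ℕ} (hij : i < j) (hj : j < c.m) : c.b i + c.r i ≤ c.b j := by
  induction j with
  | zero => omega
  | succ k ih =>
    rcases Nat.lt_succ_iff_lt_or_eq.1 hij with h | h
    · have hk : k < c.m := by omega
      have h1 := ih h hk
      have h2 := c.hgap k (by omega)
      have := c.hr0 k hk
      linarith
    · subst h; exact (c.hgap i hj).le

lemma b_mono {i j : ℕ} (hij : i ≤ j) (hj : j < c.m) : c.b i ≤ c.b j := by
  rcases eq_or_lt_of_le hij with h | h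
  · subst h; rfl
  · have := c.chain h hj
    have := c.hr0 i (lt_trans h hj)
    linarith

/-- `F ⊆ [0,1]`. -/
lemma F_subset : c.F ⊆ Icc 0 1 := by
  have hbdd : BddAbove c.F := c.hF.bddAbove
  have hbdd' : BddBelow c.F := c.hF.bddBelow
  have hsup : sSup c.F ∈ c.F := c.hF.sSup_mem c.hFne
  have hinf : sInf c.F ∈ c.F := c.hF.sInf_mem c.hFne
  have hsup1 : sSup c.F ≤ 1 := by
    have hx2 : sSup c.F ∈ ⋃ i ∈ Finset.range c.m, (fun x => c.b i + c.r i * x) '' c.F := by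
      rw [← c.hFattr]; exact hsup
    simp only [Set.mem_iUnion, Set.mem_image, Finset.mem_range] at hx2
    obtain ⟨i, hi, y, hy, hxy⟩ := hx2
    have hyle : y ≤ sSup c.F := le_csSup hbdd hy
    have h1 := c.hb1 i hi
    have h0 := c.hr0 i hi
    have h2 := c.hr1 i hi
    nlinarith
  have hinf0 : 0 ≤ sInf c.F := by
    have hx2 : sInf c.F ∈ ⋃ i ∈ Finset.range c.m, (fun x => c.b i + c.r i * x) '' c.F := by
      rw [← c.hFattr]; exact hinf
    simp only [Set.mem_iUnion, Set.mem_image, Finset.mem_range] at hx2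
    obtain ⟨i, hi, y, hy, hxy⟩ := hx2
    have hyge : sInf c.F ≤ y := csInf_le hbdd' hy
    have h1 := c.hb0 i hi
    have h0 := c.hr0 i hi
    have h2 := c.hr1 i hi
    nlinarith
  intro x hx
  exact ⟨le_trans hinf0 (csInf_le hbdd' hx), le_trans (le_csSup hbdd hx) hsup1⟩

lemma cell_unique {x : ℝ} {i j : ℕ} (hi : i < c.m) (hj : j < c.m)
    (h1 : c.b i < x) (h2 : x < c.b i + c.r i) (h3 : c.b j < x) (h4 : x < c.b j + c.r j) :
    i = j := by
  by_contra hne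
  rcases lt_or_gt_of_ne hne with h | h
  · have := c.chain h hj; linarith
  · have := c.chain h hi; linarith


/-! ### The self-similar distribution function -/

/-- Iterates of the transfer operator, starting from the clamp function. -/
def fseq : ℕ → ℝ → ℝ
  | 0 => fun x => max 0 (min x 1)
  | n + 1 => fun x => ∑ i ∈ Finset.range c.m, c.p i * fseq n ((x - c.b i) / c.r i)

lemma fseq_succ (n : ℕ) (x : ℝ) :
    c.fseq (n + 1) x = ∑ i ∈ Finset.range c.m, c.p i * c.fseq n ((x - c.b i) / c.r i) := rfl

lemma fseq_mono (n : ℕ) : Monotone (c.fseq n) := by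
  induction n with
  | zero =>
    intro x y hxy
    exact max_le_max le_rfl (min_le_min hxy le_rfl)
  | succ n ih =>
    intro x y hxy
    rw [fseq_succ, fseq_succ]
    refine Finset.sum_le_sum fun i hi => ?_
    have hri := c.hr0 i (Finset.mem_range.1 hi)
    have hp := (c.p_pos (Finset.mem_range.1 hi)).le
    have harg : (x - c.b i) / c.r i ≤ (y - c.b i) / c.r i := by
      apply div_le_div_of_nonneg_right ?_ hri.le <;> linarith
    exact mul_le_mul_of_nonneg_left (ih harg) hp

lemma fseq_of_nonpos : ∀ n, ∀ x : ℝ, x ≤ 0 → c.fseq n x = 0 := by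
  intro n
  induction n with
  | zero =>
    intro x hx
    simp only [fseq]
    rw [max_eq_left]
    exact min_le_of_left_le hx
  | succ n ih =>
    intro x hx
    rw [fseq_succ]
    refine Finset.sum_eq_zero fun i hi => ?_
    have him := Finset.mem_range.1 hi
    have hri := c.hr0 i him
    have hbi := c.hb0 i him
    rw [ih _ (div_nonpos_of_nonpos_of_nonneg (by linarith) hri.le)]
    · ring
  

lemma fseq_of_one_le : ∀ n, ∀ x : ℝ, 1 ≤ x → c.fseq n x = 1 := by
  intro n
  induction n with
  | zero =>
    intro x hx
    simp only [fseq]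
    rw [min_eq_right hx, max_eq_right zero_le_one]
  | succ n ih =>
    intro x hx
    rw [fseq_succ]
    have : ∀ i ∈ Finset.range c.m, c.p i * c.fseq n ((x - c.b i) / c.r i) = c.p i := by
      intro i hi
      have him := Finset.mem_range.1 hi
      have hri := c.hr0 i him
      have hbi := c.hb1 i him
      rw [ih _ (by rw [le_div_iff₀ hri]; linarith), mul_one]
    rw [Finset.sum_congr rfl this, c.p_sum]

lemma fseq_nonneg (n : ℕ) (x : ℝ) : 0 ≤ c.fseq n x := by
  have := c.fseq_mono n (le_max_left x 0)
  rcases le_or_gt x 0 with h | h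
  · rw [c.fseq_of_nonpos n x h]
  · calc (0:ℝ) = c.fseq n 0 := (c.fseq_of_nonpos n 0 le_rfl).symm
    _ ≤ c.fseq n x := c.fseq_mono n h.le

lemma fseq_le_one (n : ℕ) (x : ℝ) : c.fseq n x ≤ 1 := by
  rcases le_or_gt 1 x with h | h
  · rw [c.fseq_of_one_le n x h]
  · calc c.fseq n x ≤ c.fseq n 1 := c.fseq_mono n h.le
    _ = 1 := c.fseq_of_one_le n 1 le_rfl

/-- the contraction factor -/
def q : ℝ := c.rho ^ c.s

lemma q_pos : 0 < c.q := Real.rpow_pos_of_pos c.rho_pos _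

lemma q_lt_one : c.q < 1 := Real.rpow_lt_one c.rho_pos.le c.rho_lt_one c.hs

lemma p_le_q {i : ℕ} (hi : i < c.m) : c.p i ≤ c.q :=
  Real.rpow_le_rpow (c.hr0 i hi).le (c.le_rho hi) c.hs.le

lemma fseq_contract (n : ℕ) (x : ℝ) :
    |c.fseq (n + 1) x - c.fseq n x| ≤ c.q ^ n := by
  induction n generalizing x with
  | zero =>
    rw [pow_zero, abs_le]
    constructor <;>
      [have h1 := c.fseq_le_one 0 x; have h1 := c.fseq_le_one 1 x] <;>
      [have h2 := c.fseq_nonneg 1 x; have h2 := c.fseq_nonneg 0 x] <;> linarith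
  | succ n ih =>
    rw [fseq_succ, fseq_succ, ← Finset.sum_sub_distrib]
    have hterm : ∀ i ∈ Finset.range c.m,
        c.p i * c.fseq (n+1) ((x - c.b i) / c.r i) - c.p i * c.fseq n ((x - c.b i) / c.r i)
        = c.p i * (c.fseq (n+1) ((x - c.b i) / c.r i) - c.fseq n ((x - c.b i) / c.r i)) := by
      intro i _; ring
    rw [Finset.sum_congr rfl hterm]
    -- at most one term is nonzero
    by_cases hex : ∃ i, i < c.m ∧ c.b i < x ∧ x < c.b i + c.r i
    · obtain ⟨i₀, hi₀, hx1, hx2⟩ := hex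
      have hzero : ∀ i ∈ Finset.range c.m, i ≠ i₀ →
          c.p i * (c.fseq (n+1) ((x - c.b i) / c.r i) - c.fseq n ((x - c.b i) / c.r i)) = 0 := by
        intro i hi hne
        have him := Finset.mem_range.1 hi
        have hri := c.hr0 i him
        have : x ≤ c.b i ∨ c.b i + c.r i ≤ x := by
          by_contra hcon
          push_neg at hcon
          exact hne (c.cell_unique him hi₀ hcon.1 hcon.2 hx1 hx2)
        rcases this with h | h
        · rw [c.fseq_of_nonpos (n+1) _ (div_nonpos_of_nonpos_of_nonneg (by linarith) hri.le),
            c.fseq_of_nonpos n _ (div_nonpos_of_nonpos_of_nonneg (by linarith) hri.le)]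
          ring
        · rw [c.fseq_of_one_le (n+1) _ (by rw [le_div_iff₀ hri]; linarith),
            c.fseq_of_one_le n _ (by rw [le_div_iff₀ hri]; linarith)]
          ring
      rw [Finset.sum_eq_single_of_mem i₀ (Finset.mem_range.2 hi₀) hzero]
      rw [abs_mul, abs_of_pos (c.p_pos hi₀)]
      calc c.p i₀ * |c.fseq (n+1) ((x - c.b i₀) / c.r i₀) - c.fseq n ((x - c.b i₀) / c.r i₀)|
          ≤ c.q * c.q ^ n :=
            mul_le_mul (c.p_le_q hi₀) (ih _) (abs_nonneg _) c.q_pos.le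
        _ = c.q ^ (n + 1) := by ring
    · push_neg at hex
      have hzero : ∀ i ∈ Finset.range c.m,
          c.p i * (c.fseq (n+1) ((x - c.b i) / c.r i) - c.fseq n ((x - c.b i) / c.r i)) = 0 := by
        intro i hi
        have him := Finset.mem_range.1 hi
        have hri := c.hr0 i him
        rcases le_or_gt x (c.b i) with h | h
        · rw [c.fseq_of_nonpos (n+1) _ (div_nonpos_of_nonpos_of_nonneg (by linarith) hri.le),
            c.fseq_of_nonpos n _ (div_nonpos_of_nonpos_of_nonneg (by linarith) hri.le)]
          ring
        · have h2 := hex i him h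
          rw [c.fseq_of_one_le (n+1) _ (by rw [le_div_iff₀ hri]; linarith),
            c.fseq_of_one_le n _ (by rw [le_div_iff₀ hri]; linarith)]
          ring
      rw [Finset.sum_eq_zero hzero, abs_zero]
      exact pow_nonneg c.q_pos.le _

lemma fseq_cauchy (x : ℝ) : CauchySeq (fun n => c.fseq n x) := by
  apply cauchySeq_of_le_geometric c.q 1 c.q_lt_one
  intro n
  rw [Real.dist_eq, one_mul, abs_sub_comm]
  exact c.fseq_contract n x

/-- The self-similar distribution function. -/
def f : ℝ → ℝ := fun x => limUnder atTop (fun n => c.fseq n x)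

lemma f_tendsto (x : ℝ) : Tendsto (fun n => c.fseq n x) atTop (nhds (c.f x)) :=
  (c.fseq_cauchy x).tendsto_limUnder

lemma f_mono : Monotone c.f := by
  intro x y hxy
  exact le_of_tendsto_of_tendsto (c.f_tendsto x) (c.f_tendsto y)
    (Eventually.of_forall fun n => c.fseq_mono n hxy)

lemma f_of_nonpos {x : ℝ} (hx : x ≤ 0) : c.f x = 0 := by
  have := c.f_tendsto x
  rw [tendsto_congr (fun n => c.fseq_of_nonpos n x hx)] at this
  exact tendsto_nhds_unique this tendsto_const_nhds

lemma f_of_one_le {x : ℝ} (hx : 1 ≤ x) : c.f x = 1 := by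
  have := c.f_tendsto x
  rw [tendsto_congr (fun n => c.fseq_of_one_le n x hx)] at this
  exact tendsto_nhds_unique this tendsto_const_nhds

lemma f_nonneg (x : ℝ) : 0 ≤ c.f x :=
  ge_of_tendsto (c.f_tendsto x) (Eventually.of_forall fun n => c.fseq_nonneg n x)

lemma f_le_one (x : ℝ) : c.f x ≤ 1 :=
  le_of_tendsto (c.f_tendsto x) (Eventually.of_forall fun n => c.fseq_le_one n x)

/-- The fixed point equation. -/
lemma f_fix (x : ℝ) : c.f x = ∑ i ∈ Finset.range c.m, c.p i * c.f ((x - c.b i) / c.r i) := by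
  have h1 : Tendsto (fun n => c.fseq (n + 1) x) atTop (nhds (c.f x)) :=
    (c.f_tendsto x).comp (tendsto_add_atTop_nat 1)
  have h2 : Tendsto (fun n => c.fseq (n + 1) x) atTop
      (nhds (∑ i ∈ Finset.range c.m, c.p i * c.f ((x - c.b i) / c.r i))) := by
    simp only [fseq_succ]
    exact tendsto_finset_sum _ fun i _ => (c.f_tendsto _).const_mul _
  exact tendsto_nhds_unique h1 h2


/-- Key inequality: zooming into one piece. -/
lemma sim_diff {i : ℕ} (hi : i < c.m) {t t' : ℝ} (ht : t ≤ t') :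
    c.p i * (c.f t' - c.f t) ≤ c.f (c.b i + c.r i * t') - c.f (c.b i + c.r i * t) := by
  have hri := c.hr0 i hi
  have e1 := c.f_fix (c.b i + c.r i * t)
  have e2 := c.f_fix (c.b i + c.r i * t')
  have hargi : ∀ u : ℝ, (c.b i + c.r i * u - c.b i) / c.r i = u := by
    intro u; field_simp; ring
  rw [e1, e2, ← Finset.sum_sub_distrib]
  have hterm : ∀ j ∈ Finset.range c.m,
      (0:ℝ) ≤ c.p j * c.f ((c.b i + c.r i * t' - c.b j) / c.r j)
        - c.p j * c.f ((c.b i + c.r i * t - c.b j) / c.r j) := by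
    intro j hj
    have hjm := Finset.mem_range.1 hj
    have hrj := c.hr0 j hjm
    have harg : (c.b i + c.r i * t - c.b j) / c.r j ≤ (c.b i + c.r i * t' - c.b j) / c.r j := by
      apply div_le_div_of_nonneg_right ?_ hrj.le
      nlinarith
    nlinarith [c.f_mono harg, c.p_pos hjm]
  calc c.p i * (c.f t' - c.f t)
      = c.p i * c.f ((c.b i + c.r i * t' - c.b i) / c.r i)
        - c.p i * c.f ((c.b i + c.r i * t - c.b i) / c.r i) := by rw [hargi, hargi]; ring
    _ ≤ _ := Finset.single_le_sum (f := fun j => c.p j * c.f ((c.b i + c.r i * t' - c.b j) / c.r j)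
        - c.p j * c.f ((c.b i + c.r i * t - c.b j) / c.r j)) hterm (Finset.mem_range.2 hi)

/-- Equality version for `t, t' ∈ [0,1]`. -/
lemma sim_diff_eq {i : ℕ} (hi : i < c.m) {t t' : ℝ}
    (ht0 : 0 ≤ t) (ht1 : t ≤ 1) (ht0' : 0 ≤ t') (ht1' : t' ≤ 1) :
    c.f (c.b i + c.r i * t') - c.f (c.b i + c.r i * t) = c.p i * (c.f t' - c.f t) := by
  have hri := c.hr0 i hi
  have e1 := c.f_fix (c.b i + c.r i * t)
  have e2 := c.f_fix (c.b i + c.r i * t')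
  have hargi : ∀ u : ℝ, (c.b i + c.r i * u - c.b i) / c.r i = u := by
    intro u; field_simp; ring
  rw [e1, e2, ← Finset.sum_sub_distrib]
  have hterm : ∀ j ∈ Finset.range c.m, j ≠ i →
      c.p j * c.f ((c.b i + c.r i * t' - c.b j) / c.r j)
        - c.p j * c.f ((c.b i + c.r i * t - c.b j) / c.r j) = 0 := by
    intro j hj hne
    have hjm := Finset.mem_range.1 hj
    have hrj := c.hr0 j hjm
    rcases lt_or_gt_of_ne hne with h | h
    · -- j < i : both arguments are ≥ 1
      have hch := c.chain h hi
      have a1 : (1:ℝ) ≤ (c.b i + c.r i * t - c.b j) / c.r j := by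
        rw [le_div_iff₀ hrj]; nlinarith
      have a2 : (1:ℝ) ≤ (c.b i + c.r i * t' - c.b j) / c.r j := by
        rw [le_div_iff₀ hrj]; nlinarith
      rw [c.f_of_one_le a1, c.f_of_one_le a2]; ring
    · -- j > i : both arguments are ≤ 0
      have hch := c.chain h hjm
      have a1 : (c.b i + c.r i * t - c.b j) / c.r j ≤ 0 := by
        apply div_nonpos_of_nonpos_of_nonneg ?_ hrj.le; nlinarith
      have a2 : (c.b i + c.r i * t' - c.b j) / c.r j ≤ 0 := by
        apply div_nonpos_of_nonpos_of_nonneg ?_ hrj.le; nlinarith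
      rw [c.f_of_nonpos a1, c.f_of_nonpos a2]; ring
  rw [Finset.sum_eq_single_of_mem i (Finset.mem_range.2 hi) hterm, hargi, hargi]
  ring


lemma holder_aux : ∀ n : ℕ, ∀ h x : ℝ, 0 < h → c.g * c.rho ^ n ≤ h →
    c.f (x + h) - c.f x ≤ (h / c.g) ^ c.s := by
  intro n
  induction n with
  | zero =>
    intro h x hh hn
    rw [pow_zero, mul_one] at hn
    have h1 : (1:ℝ) ≤ h / c.g := (one_le_div c.g_pos).2 hn
    calc c.f (x + h) - c.f x ≤ 1 := by
          have := c.f_le_one (x + h); have := c.f_nonneg x; linarith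
      _ ≤ (h / c.g) ^ c.s := Real.one_le_rpow h1 c.hs.le
  | succ n ih =>
    intro h x hh hn
    rcases le_or_gt (c.g * c.rho ^ n) h with hcase | hcase
    · exact ih h x hh hcase
    have hlt : h < c.g := by
      have : c.rho ^ n ≤ 1 := pow_le_one₀ c.rho_pos.le c.rho_lt_one.le
      nlinarith [c.g_pos]
    have hrpow_pos : (0:ℝ) < (h / c.g) ^ c.s :=
      Real.rpow_pos_of_pos (div_pos hh c.g_pos) _
    rw [c.f_fix (x + h), c.f_fix x, ← Finset.sum_sub_distrib]
    by_cases hex : ∃ i, i < c.m ∧ c.b i < x + h ∧ x < c.b i + c.r i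
    · obtain ⟨i₀, hi₀, hx1, hx2⟩ := hex
      have hzero : ∀ j ∈ Finset.range c.m, j ≠ i₀ →
          c.p j * c.f ((x + h - c.b j) / c.r j) - c.p j * c.f ((x - c.b j) / c.r j) = 0 := by
        intro j hj hne
        have hjm := Finset.mem_range.1 hj
        have hrj := c.hr0 j hjm
        have hdisj : x + h ≤ c.b j ∨ c.b j + c.r j ≤ x := by
          by_contra hcon
          push_neg at hcon
          apply hne
          rcases lt_or_gt_of_ne hne with hlt' | hgt'
          · have h1 : c.b (j+1) ≤ c.b i₀ := c.b_mono hlt' hi₀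
            have h2 := c.g_le (lt_of_le_of_lt (Nat.succ_le_of_lt hlt') hi₀)
            linarith
          · have h1 : c.b (i₀+1) ≤ c.b j := c.b_mono hgt' hjm
            have h2 := c.g_le (lt_of_le_of_lt (Nat.succ_le_of_lt hgt') hjm)
            linarith
        rcases hdisj with hd | hd
        · rw [c.f_of_nonpos (div_nonpos_of_nonpos_of_nonneg (by linarith) hrj.le),
            c.f_of_nonpos (div_nonpos_of_nonpos_of_nonneg (by linarith) hrj.le)]
          ring
        · rw [c.f_of_one_le (by rw [le_div_iff₀ hrj]; linarith),
            c.f_of_one_le (by rw [le_div_iff₀ hrj]; linarith)]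
          ring
      rw [Finset.sum_eq_single_of_mem i₀ (Finset.mem_range.2 hi₀) hzero]
      have hr₀ := c.hr0 i₀ hi₀
      have harg : (x + h - c.b i₀) / c.r i₀ = (x - c.b i₀) / c.r i₀ + h / c.r i₀ := by
        ring
      have hIH : c.f ((x - c.b i₀) / c.r i₀ + h / c.r i₀) - c.f ((x - c.b i₀) / c.r i₀)
          ≤ (h / c.r i₀ / c.g) ^ c.s := by
        apply ih _ _ (div_pos hh hr₀)
        rw [le_div_iff₀ hr₀]
        calc c.g * c.rho ^ n * c.r i₀ ≤ c.g * c.rho ^ n * c.rho := by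
              have h1 := c.le_rho hi₀
              have h2 : (0:ℝ) < c.g * c.rho ^ n := mul_pos c.g_pos (pow_pos c.rho_pos n)
              nlinarith
          _ = c.g * c.rho ^ (n + 1) := by ring
          _ ≤ h := hn
      have hkey : c.p i₀ * ((h / c.r i₀ / c.g) ^ c.s) = (h / c.g) ^ c.s := by
        have h1 : h / c.r i₀ / c.g = (h / c.g) / c.r i₀ := by ring
        rw [h1, Real.div_rpow (div_pos hh c.g_pos).le hr₀.le]
        rw [p]
        field_simp
      calc c.p i₀ * c.f ((x + h - c.b i₀) / c.r i₀) - c.p i₀ * c.f ((x - c.b i₀) / c.r i₀)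
          = c.p i₀ * (c.f ((x - c.b i₀) / c.r i₀ + h / c.r i₀) - c.f ((x - c.b i₀) / c.r i₀)) := by
            rw [harg]; ring
        _ ≤ c.p i₀ * ((h / c.r i₀ / c.g) ^ c.s) :=
            mul_le_mul_of_nonneg_left hIH (c.p_pos hi₀).le
        _ = (h / c.g) ^ c.s := hkey
    · push_neg at hex
      have hzero : ∀ j ∈ Finset.range c.m,
          c.p j * c.f ((x + h - c.b j) / c.r j) - c.p j * c.f ((x - c.b j) / c.r j) = 0 := by
        intro j hj
        have hjm := Finset.mem_range.1 hj
        have hrj := c.hr0 j hjm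
        rcases le_or_gt (x + h) (c.b j) with hd | hd
        · rw [c.f_of_nonpos (div_nonpos_of_nonpos_of_nonneg (by linarith) hrj.le),
            c.f_of_nonpos (div_nonpos_of_nonpos_of_nonneg (by linarith) hrj.le)]
          ring
        · have hd2 := hex j hjm hd
          rw [c.f_of_one_le (by rw [le_div_iff₀ hrj]; linarith),
            c.f_of_one_le (by rw [le_div_iff₀ hrj]; linarith)]
          ring
      rw [Finset.sum_eq_zero hzero]
      exact hrpow_pos.le

/-- The global Hölder estimate. -/
lemma holder {x y : ℝ} (hxy : x ≤ y) : c.f y - c.f x ≤ ((y - x) / c.g) ^ c.s := by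
  rcases eq_or_lt_of_le hxy with h | h
  · subst h
    rw [sub_self, sub_self, zero_div, Real.zero_rpow c.hs.ne']
  · obtain ⟨n, hn⟩ := exists_pow_lt_of_lt_one (div_pos (by linarith : 0 < y - x) c.g_pos)
      c.rho_lt_one
    have : c.g * c.rho ^ n ≤ y - x := ((lt_div_iff₀' c.g_pos).1 hn).le
    have := c.holder_aux n (y - x) x (by linarith) this
    simpa using this

/-- The lower (Frostman) estimate at points of `F`. -/
lemma frostL_aux : ∀ n : ℕ, ∀ x ∈ c.F, ∀ R : ℝ, 0 < R → R ≤ 1 → c.rho ^ n ≤ R →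
    c.eps ^ c.s * R ^ c.s ≤ c.f (x + R) - c.f (x - R) := by
  intro n
  induction n with
  | zero =>
    intro x hx R hR0 hR1 hRn
    rw [pow_zero] at hRn
    have hR : R = 1 := le_antisymm hR1 hRn
    subst hR
    have hx01 := c.F_subset hx
    rw [c.f_of_one_le (by linarith [hx01.1] : (1:ℝ) ≤ x + 1),
      c.f_of_nonpos (by linarith [hx01.2] : x - 1 ≤ 0)]
    rw [Real.one_rpow, mul_one]
    have : c.eps ^ c.s ≤ 1 := Real.rpow_le_one c.eps_pos.le c.eps_lt_one.le c.hs.le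
    linarith
  | succ n ih =>
    intro x hx R hR0 hR1 hRn
    rcases le_or_gt (c.rho ^ n) R with hcase | hcase
    · exact ih x hx R hR0 hR1 hcase
    -- zoom into the piece containing x
    have hx2 : x ∈ ⋃ i ∈ Finset.range c.m, (fun t => c.b i + c.r i * t) '' c.F := by
      rw [← c.hFattr]; exact hx
    simp only [Set.mem_iUnion, Set.mem_image, Finset.mem_range] at hx2
    obtain ⟨i, hi, y, hy, hxy⟩ := hx2
    have hri := c.hr0 i hi
    set R' := R / c.r i with hR'
    have hR'0 : 0 < R' := div_pos hR0 hri
    have key := c.sim_diff hi (by linarith : y - R' ≤ y + R')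
    have hrr : c.r i * R' = R := by
      rw [hR', mul_comm, div_mul_cancel₀ _ hri.ne']
    have hxp : c.b i + c.r i * (y + R') = x + R := by
      rw [← hxy, mul_add, hrr]; ring
    have hxm : c.b i + c.r i * (y - R') = x - R := by
      rw [← hxy, mul_sub, hrr]; ring
    rw [hxp, hxm] at key
    have hy01 := c.F_subset hy
    rcases le_or_gt R' 1 with hR'1 | hR'1
    · have hIH : c.eps ^ c.s * R' ^ c.s ≤ c.f (y + R') - c.f (y - R') := by
        apply ih y hy R' hR'0 hR'1
        calc c.rho ^ n = c.rho ^ (n+1) / c.rho := by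
              rw [pow_succ, mul_div_assoc, div_self c.rho_pos.ne', mul_one]
          _ ≤ R / c.rho := div_le_div_of_nonneg_right hRn c.rho_pos.le
          _ ≤ R / c.r i := div_le_div_of_nonneg_left hR0.le hri (c.le_rho hi)
      have hpR : c.p i * (c.eps ^ c.s * R' ^ c.s) = c.eps ^ c.s * R ^ c.s := by
        rw [hR', Real.div_rpow hR0.le hri.le, p]
        field_simp
      calc c.eps ^ c.s * R ^ c.s = c.p i * (c.eps ^ c.s * R' ^ c.s) := hpR.symm
        _ ≤ c.p i * (c.f (y + R') - c.f (y - R')) :=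
            mul_le_mul_of_nonneg_left hIH (c.p_pos hi).le
        _ ≤ _ := key
    · -- R' > 1 : the whole piece is inside the window
      have h1 : c.f (y + R') = 1 := c.f_of_one_le (by linarith [hy01.1])
      have h0 : c.f (y - R') = 0 := c.f_of_nonpos (by linarith [hy01.2])
      rw [h1, h0] at key
      have heps : c.eps ^ c.s * R ^ c.s ≤ c.p i := by
        have e1 : c.eps ^ c.s ≤ c.r i ^ c.s :=
          Real.rpow_le_rpow c.eps_pos.le (c.eps_le hi) c.hs.le
        have e2 : R ^ c.s ≤ 1 := Real.rpow_le_one hR0.le hR1 c.hs.le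
        have e3 : (0:ℝ) < c.eps ^ c.s := Real.rpow_pos_of_pos c.eps_pos _
        rw [p]
        nlinarith [Real.rpow_pos_of_pos hR0 c.s]
      calc c.eps ^ c.s * R ^ c.s ≤ c.p i := heps
        _ = c.p i * (1 - 0) := by ring
        _ ≤ _ := key

lemma frostL {x : ℝ} (hx : x ∈ c.F) {R : ℝ} (hR0 : 0 < R) (hR1 : R ≤ 1) :
    c.eps ^ c.s * R ^ c.s ≤ c.f (x + R) - c.f (x - R) := by
  obtain ⟨n, hn⟩ := exists_pow_lt_of_lt_one hR0 c.rho_lt_one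
  exact c.frostL_aux n x hx R hR0 hR1 hn.le

lemma holder_abs (x y : ℝ) : |c.f y - c.f x| ≤ (|y - x| / c.g) ^ c.s := by
  rcases le_total x y with h | h
  · rw [abs_of_nonneg (by linarith [c.f_mono h]), abs_of_nonneg (by linarith)]
    exact c.holder h
  · rw [abs_of_nonpos (by linarith [c.f_mono h]), abs_of_nonpos (by linarith)]
    simpa [neg_sub] using c.holder h

lemma f_continuous : Continuous c.f := by
  rw [continuous_iff_continuousAt]
  intro x
  rw [ContinuousAt, ← tendsto_sub_nhds_zero_iff]
  have hb : Tendsto (fun y : ℝ => (|y - x| / c.g) ^ c.s) (nhds x) (nhds 0) := by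
    have hc : ContinuousAt (fun t : ℝ => (|t - x| / c.g) ^ c.s) x := by
      apply ContinuousAt.rpow_const
      · exact ((continuous_abs.comp (continuous_id.sub continuous_const)).div_const _).continuousAt
      · exact Or.inr c.hs.le
    have h0 : (|x - x| / c.g) ^ c.s = 0 := by
      simp [Real.zero_rpow c.hs.ne']
    have := hc.tendsto
    rw [h0] at this
    exact this
  exact squeeze_zero_norm
    (fun y => by simpa [Real.norm_eq_abs] using c.holder_abs x y) hb


/-! ### The self-similar measure -/

/-- `f` as a Stieltjes function. -/
def fS : StieltjesFunction ℝ where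
  toFun := c.f
  mono' := c.f_mono
  right_continuous' := fun x => (c.f_continuous.continuousAt).continuousWithinAt

lemma fS_apply (x : ℝ) : c.fS x = c.f x := rfl

/-- The self-similar measure. -/
def mu : Measure ℝ := c.fS.measure

lemma f_tendsto_atBot : Tendsto c.f atBot (nhds 0) := by
  apply Tendsto.congr' _ (tendsto_const_nhds (α := ℝ))
  filter_upwards [eventually_le_atBot (0:ℝ)] with x hx
  exact (c.f_of_nonpos hx).symm

lemma f_tendsto_atTop : Tendsto c.f atTop (nhds 1) := by
  apply Tendsto.congr' _ (tendsto_const_nhds (α := ℝ))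
  filter_upwards [eventually_ge_atTop (1:ℝ)] with x hx
  exact (c.f_of_one_le hx).symm

lemma mu_univ : c.mu univ = 1 := by
  rw [mu, c.fS.measure_univ c.f_tendsto_atBot c.f_tendsto_atTop]
  norm_num

lemma mu_finite : IsFiniteMeasure c.mu :=
  ⟨by rw [mu_univ]; exact ENNReal.one_lt_top⟩

lemma leftLim_f (x : ℝ) : Function.leftLim c.f x = c.f x :=
  leftLim_eq_of_tendsto
    ((c.f_continuous.tendsto x).mono_left nhdsWithin_le_nhds)

lemma mu_Ioc (a b : ℝ) : c.mu (Ioc a b) = ENNReal.ofReal (c.f b - c.f a) :=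
  c.fS.measure_Ioc a b

lemma mu_Icc (a b : ℝ) : c.mu (Icc a b) = ENNReal.ofReal (c.f b - c.f a) := by
  rw [mu, c.fS.measure_Icc]
  show ENNReal.ofReal (c.f b - Function.leftLim c.f a) = _
  rw [leftLim_f]

lemma mu_Iic (a : ℝ) : c.mu (Iic a) = ENNReal.ofReal (c.f a) := by
  rw [mu, c.fS.measure_Iic c.f_tendsto_atBot]
  show ENNReal.ofReal (c.f a - 0) = _
  rw [sub_zero]

lemma map_meas (i : ℕ) : Measurable (fun x : ℝ => c.b i + c.r i * x) :=
  (measurable_id.const_mul _).const_add _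

/-- The self-similarity of the measure. -/
lemma selfSim : c.mu = ∑ i ∈ Finset.range c.m,
    ENNReal.ofReal (c.p i) • Measure.map (fun x => c.b i + c.r i * x) c.mu := by
  have := c.mu_finite
  refine Measure.ext_of_Iic c.mu _ (fun a => ?_)
  rw [Measure.finset_sum_apply]
  have hterm : ∀ i ∈ Finset.range c.m,
      (ENNReal.ofReal (c.p i) • Measure.map (fun x => c.b i + c.r i * x) c.mu) (Iic a)
      = ENNReal.ofReal (c.p i * c.f ((a - c.b i) / c.r i)) := by
    intro i hi
    have him := Finset.mem_range.1 hi
    have hri := c.hr0 i him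
    have hpre : (fun x : ℝ => c.b i + c.r i * x) ⁻¹' (Iic a) = Iic ((a - c.b i) / c.r i) := by
      ext t
      simp only [Set.mem_preimage, Set.mem_Iic]
      rw [le_div_iff₀ hri]
      constructor <;> intro h <;> nlinarith
    rw [Measure.smul_apply, Measure.map_apply (c.map_meas i) measurableSet_Iic, hpre,
      c.mu_Iic, smul_eq_mul, ← ENNReal.ofReal_mul (c.p_pos him).le]
  rw [Finset.sum_congr rfl hterm, ← ENNReal.ofReal_sum_of_nonneg, c.mu_Iic, ← c.f_fix]
  intro i hi
  have him := Finset.mem_range.1 hi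
  exact mul_nonneg (c.p_pos him).le (c.f_nonneg _)

/-- The sets of the natural covering at level `n`. -/
def E : ℕ → Set ℝ
  | 0 => Icc 0 1
  | n + 1 => ⋃ i ∈ Finset.range c.m, (fun x => c.b i + c.r i * x) '' E n

lemma E_compact : ∀ n, IsCompact (c.E n) := by
  intro n
  induction n with
  | zero => exact isCompact_Icc
  | succ n ih =>
    apply (Finset.range c.m).isCompact_biUnion
    intro i _
    exact ih.image (by continuity)

lemma E_one_subset : c.E 1 ⊆ c.E 0 := by
  intro z hz
  simp only [E, Set.mem_iUnion, Set.mem_image, Finset.mem_range] at hz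
  obtain ⟨i, hi, t, ht, hzt⟩ := hz
  have h0 := c.hb0 i hi
  have h1 := c.hb1 i hi
  have hr := c.hr0 i hi
  have ht' : t ∈ Icc (0:ℝ) 1 := ht
  constructor <;> nlinarith [ht'.1, ht'.2]

lemma E_anti : ∀ n, c.E (n+1) ⊆ c.E n := by
  intro n
  induction n with
  | zero => exact c.E_one_subset
  | succ n ih =>
    apply Set.iUnion₂_mono
    intro i _
    exact Set.image_mono ih

lemma F_sub_E : ∀ n, c.F ⊆ c.E n := by
  intro n
  induction n with
  | zero => exact c.F_subset
  | succ n ih =>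
    rw [c.hFattr]
    apply Set.iUnion₂_mono
    intro i _
    exact Set.image_mono ih

lemma E_close : ∀ n, ∀ z ∈ c.E n, ∃ y ∈ c.F, |z - y| ≤ c.rho ^ n := by
  intro n
  induction n with
  | zero =>
    intro z hz
    obtain ⟨y, hy⟩ := c.hFne
    refine ⟨y, hy, ?_⟩
    have hz' : z ∈ Icc (0:ℝ) 1 := hz
    have hy' := c.F_subset hy
    rw [pow_zero, abs_le]
    constructor <;> [linarith [hz'.2, hy'.1, hz'.1, hy'.2]; linarith [hz'.2, hy'.1]]
  | succ n ih =>
    intro z hz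
    simp only [E, Set.mem_iUnion, Set.mem_image, Finset.mem_range] at hz
    obtain ⟨i, hi, t, ht, hzt⟩ := hz
    obtain ⟨y, hy, hty⟩ := ih t ht
    refine ⟨c.b i + c.r i * y, ?_, ?_⟩
    · rw [c.hFattr]
      simp only [Set.mem_iUnion, Set.mem_image, Finset.mem_range]
      exact ⟨i, hi, y, hy, rfl⟩
    · have hr0 := c.hr0 i hi
      have hrr := c.le_rho hi
      rw [← hzt]
      have : c.b i + c.r i * t - (c.b i + c.r i * y) = c.r i * (t - y) := by ring
      rw [this, abs_mul, abs_of_pos hr0, pow_succ]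
      calc c.r i * |t - y| ≤ c.rho * c.rho ^ n := by
            apply mul_le_mul hrr hty (abs_nonneg _) c.rho_pos.le
        _ = c.rho ^ n * c.rho := by ring

lemma F_eq_iInter : c.F = ⋂ n, c.E n := by
  apply Set.Subset.antisymm
  · exact Set.subset_iInter c.F_sub_E
  · intro z hz
    rw [Set.mem_iInter] at hz
    have hcl : IsClosed c.F := c.hF.isClosed
    rw [← hcl.closure_eq]
    rw [Metric.mem_closure_iff]
    intro δ hδ
    obtain ⟨n, hn⟩ := exists_pow_lt_of_lt_one hδ c.rho_lt_one
    obtain ⟨y, hy, hzy⟩ := c.E_close n z (hz n)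
    exact ⟨y, hy, lt_of_le_of_lt (by rwa [Real.dist_eq]) hn⟩

lemma mu_E : ∀ n, c.mu (c.E n) = 1 := by
  have hfin := c.mu_finite
  have hle : ∀ A : Set ℝ, c.mu A ≤ 1 := by
    intro A
    rw [← c.mu_univ]
    exact measure_mono (Set.subset_univ A)
  intro n
  induction n with
  | zero =>
    refine le_antisymm (hle _) ?_
    calc (1:ℝ≥0∞) = c.mu (Ioc 0 1) := by
          rw [c.mu_Ioc, c.f_of_one_le le_rfl, c.f_of_nonpos le_rfl]
          norm_num
      _ ≤ c.mu (c.E 0) := measure_mono Set.Ioc_subset_Icc_self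
  | succ n ih =>
    refine le_antisymm (hle _) ?_
    have hmeas : MeasurableSet (c.E (n+1)) := (c.E_compact (n+1)).isClosed.measurableSet
    have step : ∀ i ∈ Finset.range c.m,
        ENNReal.ofReal (c.p i) ≤
        (ENNReal.ofReal (c.p i) • Measure.map (fun x => c.b i + c.r i * x) c.mu) (c.E (n+1)) := by
      intro i hi
      have him := Finset.mem_range.1 hi
      rw [Measure.smul_apply, Measure.map_apply (c.map_meas i) hmeas, smul_eq_mul]
      have hsub : c.E n ⊆ (fun x => c.b i + c.r i * x) ⁻¹' (c.E (n+1)) := by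
        intro t ht
        simp only [Set.mem_preimage, E, Set.mem_iUnion, Set.mem_image, Finset.mem_range]
        exact ⟨i, him, t, ht, rfl⟩
      calc ENNReal.ofReal (c.p i) = ENNReal.ofReal (c.p i) * 1 := by rw [mul_one]
        _ = ENNReal.ofReal (c.p i) * c.mu (c.E n) := by rw [ih]
        _ ≤ _ := by
            apply mul_le_mul_right (measure_mono hsub)
    calc (1:ℝ≥0∞) = ENNReal.ofReal (∑ i ∈ Finset.range c.m, c.p i) := by
          rw [c.p_sum]; norm_num
      _ = ∑ i ∈ Finset.range c.m, ENNReal.ofReal (c.p i) :=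
          ENNReal.ofReal_sum_of_nonneg (fun i hi => (c.p_pos (Finset.mem_range.1 hi)).le)
      _ ≤ ∑ i ∈ Finset.range c.m,
          (ENNReal.ofReal (c.p i) • Measure.map (fun x => c.b i + c.r i * x) c.mu) (c.E (n+1)) :=
          Finset.sum_le_sum step
      _ = c.mu (c.E (n+1)) := by
          conv_rhs => rw [c.selfSim]
          rw [Measure.finset_sum_apply]

lemma mu_F : c.mu c.F = 1 := by
  have hten : Tendsto (c.mu ∘ c.E) atTop (nhds (c.mu (⋂ n, c.E n))) := by
    apply tendsto_measure_iInter_atTop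
    · exact fun n => ((c.E_compact n).isClosed.measurableSet).nullMeasurableSet
    · exact antitone_nat_of_succ_le c.E_anti
    · exact ⟨0, by rw [c.mu_E 0]; exact ENNReal.one_ne_top⟩
  have hconst : Tendsto (c.mu ∘ c.E) atTop (nhds 1) := by
    have : c.mu ∘ c.E = fun _ => 1 := funext c.mu_E
    rw [this]
    exact tendsto_const_nhds
  rw [F_eq_iInter]
  exact tendsto_nhds_unique hten hconst


/-! ### Counting grid cells that meet `F` -/

/-- Number of grid cells considered. -/
def NR (R : ℝ) : ℕ := ⌈1/R⌉₊ + 2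

/-- The `k`-th grid cell (closed). -/
def cellI (R : ℝ) (k : ℕ) : Set ℝ := Icc ((k:ℝ) * R - R) ((k:ℝ) * R)

/-- The cells that meet `F`. -/
def K (R : ℝ) : Finset ℕ :=
  (Finset.range (NR R)).filter (fun k => (c.F ∩ cellI R k).Nonempty)

lemma cover {R : ℝ} (hR0 : 0 < R) (hR1 : R ≤ 1) {x : ℝ} (hx : x ∈ c.F) :
    ∃ k ∈ c.K R, x ∈ cellI R k := by
  have hx01 := c.F_subset hx
  set k := ⌈x / R⌉₊ with hk
  have hxR0 : 0 ≤ x / R := div_nonneg hx01.1 hR0.le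
  have h1 : x ≤ (k:ℝ) * R := by
    rw [← div_le_iff₀ hR0]
    exact Nat.le_ceil _
  have h2 : (k:ℝ) * R - R ≤ x := by
    have h3 : (k:ℝ) < x / R + 1 := Nat.ceil_lt_add_one hxR0
    have hdx : x / R * R = x := div_mul_cancel₀ x hR0.ne'
    nlinarith
  have hmem : x ∈ cellI R k := ⟨h2, h1⟩
  have hkr : k ∈ Finset.range (NR R) := by
    rw [Finset.mem_range, NR]
    have : (⌈x / R⌉₊ : ℕ) ≤ ⌈1/R⌉₊ := by
      apply Nat.ceil_le_ceil
      apply div_le_div_of_nonneg_right hx01.2 hR0.le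
    omega
  exact ⟨k, Finset.mem_filter.2 ⟨hkr, ⟨x, hx, hmem⟩⟩, hmem⟩

lemma cells_disjoint {R : ℝ} (hR0 : 0 < R) {z z' : ℤ} (h : z ≠ z') :
    Disjoint (Ioc ((z:ℝ) * R - R) ((z:ℝ) * R)) (Ioc ((z':ℝ) * R - R) ((z':ℝ) * R)) := by
  rw [Set.Ioc_disjoint_Ioc]
  rcases lt_or_gt_of_ne h with hlt | hlt
  · have : (z:ℝ) + 1 ≤ (z':ℝ) := by exact_mod_cast hlt
    calc min ((z:ℝ) * R) ((z':ℝ) * R) ≤ (z:ℝ) * R := min_le_left _ _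
      _ ≤ (z':ℝ) * R - R := by nlinarith
      _ ≤ max ((z:ℝ) * R - R) ((z':ℝ) * R - R) := le_max_right _ _
  · have : (z':ℝ) + 1 ≤ (z:ℝ) := by exact_mod_cast hlt
    calc min ((z:ℝ) * R) ((z':ℝ) * R) ≤ (z':ℝ) * R := min_le_right _ _
      _ ≤ (z:ℝ) * R - R := by nlinarith
      _ ≤ max ((z:ℝ) * R - R) ((z':ℝ) * R - R) := le_max_left _ _

/-- Sum over any finset of integers of masses of disjoint translated cells is at most 1. -/
lemma sum_cells_le {R : ℝ} (hR0 : 0 < R) (T : Finset ℤ) :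
    ∑ z ∈ T, c.mu (Ioc ((z:ℝ) * R - R) ((z:ℝ) * R)) ≤ 1 := by
  have hdisj : (T : Set ℤ).PairwiseDisjoint
      (fun z : ℤ => Ioc ((z:ℝ) * R - R) ((z:ℝ) * R)) := by
    intro z _ z' _ h
    exact cells_disjoint hR0 h
  rw [← measure_biUnion_finset hdisj (fun z _ => measurableSet_Ioc)]
  rw [← c.mu_univ]
  exact measure_mono (Set.subset_univ _)

lemma card_le {R : ℝ} (hR0 : 0 < R) (hR1 : R ≤ 1) :
    ((c.K R).card : ℝ) * (c.eps ^ c.s * R ^ c.s) ≤ 3 := by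
  have heR : 0 < c.eps ^ c.s * R ^ c.s :=
    mul_pos (Real.rpow_pos_of_pos c.eps_pos _) (Real.rpow_pos_of_pos hR0 _)
  have hcell : ∀ k ∈ c.K R, ENNReal.ofReal (c.eps ^ c.s * R ^ c.s)
      ≤ ∑ j ∈ ({-1, 0, 1} : Finset ℤ),
        c.mu (Ioc (((k:ℤ)+j:ℤ) * R - R) (((k:ℤ)+j:ℤ) * R)) := by
    intro k hk
    obtain ⟨x, hxF, hxc⟩ := (Finset.mem_filter.1 hk).2
    obtain ⟨hxc1, hxc2⟩ := hxc
    have hfr := c.frostL hxF hR0 hR1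
    have hsum : ∑ j ∈ ({-1, 0, 1} : Finset ℤ),
        c.mu (Ioc (((k:ℤ)+j:ℤ) * R - R) (((k:ℤ)+j:ℤ) * R))
        = ENNReal.ofReal (c.f ((k:ℝ) * R + R) - c.f ((k:ℝ) * R - 2*R)) := by
      rw [Finset.sum_insert (by decide), Finset.sum_insert (by decide), Finset.sum_singleton]
      rw [c.mu_Ioc, c.mu_Ioc, c.mu_Ioc]
      push_cast
      rw [← ENNReal.ofReal_add, ← ENNReal.ofReal_add]
      · ring_nf
      all_goals
        first
        | (apply sub_nonneg.2; apply c.f_mono; nlinarith)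
        | (apply add_nonneg) <;>
          (apply sub_nonneg.2; apply c.f_mono; nlinarith)
    rw [hsum]
    apply ENNReal.ofReal_le_ofReal
    have m1 : c.f (x + R) ≤ c.f ((k:ℝ) * R + R) := c.f_mono (by linarith)
    have m2 : c.f ((k:ℝ) * R - 2*R) ≤ c.f (x - R) := c.f_mono (by linarith)
    linarith
  -- aggregate
  have hagg : ((c.K R).card : ℝ≥0∞) * ENNReal.ofReal (c.eps ^ c.s * R ^ c.s) ≤ 3 := by
    have h1 : ((c.K R).card : ℝ≥0∞) * ENNReal.ofReal (c.eps ^ c.s * R ^ c.s)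
        = ∑ _k ∈ c.K R, ENNReal.ofReal (c.eps ^ c.s * R ^ c.s) := by
      rw [Finset.sum_const, nsmul_eq_mul]
    rw [h1]
    calc ∑ k ∈ c.K R, ENNReal.ofReal (c.eps ^ c.s * R ^ c.s)
        ≤ ∑ k ∈ c.K R, ∑ j ∈ ({-1, 0, 1} : Finset ℤ),
            c.mu (Ioc (((k:ℤ)+j:ℤ) * R - R) (((k:ℤ)+j:ℤ) * R)) :=
          Finset.sum_le_sum hcell
      _ = ∑ j ∈ ({-1, 0, 1} : Finset ℤ), ∑ k ∈ c.K R,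
            c.mu (Ioc (((k:ℤ)+j:ℤ) * R - R) (((k:ℤ)+j:ℤ) * R)) := Finset.sum_comm
      _ ≤ ∑ _j ∈ ({-1, 0, 1} : Finset ℤ), (1:ℝ≥0∞) := by
          apply Finset.sum_le_sum
          intro j _
          have hperm : ∑ k ∈ c.K R, c.mu (Ioc (((k:ℤ)+j:ℤ) * R - R) (((k:ℤ)+j:ℤ) * R))
              = ∑ z ∈ (c.K R).image (fun k : ℕ => (k:ℤ) + j),
                  c.mu (Ioc ((z:ℝ) * R - R) ((z:ℝ) * R)) := by
            rw [Finset.sum_image]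
            intro a _ b _ hab
            simpa using hab
          rw [hperm]
          exact c.sum_cells_le hR0 _
      _ = 3 := by simp
  have h2 : ENNReal.ofReal (((c.K R).card : ℝ) * (c.eps ^ c.s * R ^ c.s)) ≤ ENNReal.ofReal 3 := by
    rw [ENNReal.ofReal_mul (by positivity), ENNReal.ofReal_natCast]
    simpa using hagg
  exact (ENNReal.ofReal_le_ofReal_iff (by norm_num)).1 h2


lemma card_ge {R : ℝ} (hR0 : 0 < R) (hR1 : R ≤ 1) :
    (1:ℝ) ≤ ((c.K R).card : ℝ) * ((R / c.g) ^ c.s) := by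
  have hFsub : c.F ⊆ ⋃ k ∈ c.K R, cellI R k := by
    intro x hx
    obtain ⟨k, hk, hmem⟩ := c.cover hR0 hR1 hx
    exact Set.mem_biUnion hk hmem
  have hcellmass : ∀ k ∈ c.K R, c.mu (cellI R k) ≤ ENNReal.ofReal ((R / c.g) ^ c.s) := by
    intro k _
    rw [cellI, c.mu_Icc]
    apply ENNReal.ofReal_le_ofReal
    have := c.holder (by linarith : (k:ℝ) * R - R ≤ (k:ℝ) * R)
    simpa using this
  have h1 : (1:ℝ≥0∞) ≤ ((c.K R).card : ℝ≥0∞) * ENNReal.ofReal ((R / c.g) ^ c.s) := by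
    calc (1:ℝ≥0∞) = c.mu c.F := c.mu_F.symm
      _ ≤ c.mu (⋃ k ∈ c.K R, cellI R k) := measure_mono hFsub
      _ ≤ ∑ k ∈ c.K R, c.mu (cellI R k) := measure_biUnion_finset_le _ _
      _ ≤ ∑ _k ∈ c.K R, ENNReal.ofReal ((R / c.g) ^ c.s) := Finset.sum_le_sum hcellmass
      _ = ((c.K R).card : ℝ≥0∞) * ENNReal.ofReal ((R / c.g) ^ c.s) := by
          rw [Finset.sum_const, nsmul_eq_mul]
  have h2 : (1:ℝ≥0∞) ≤ ENNReal.ofReal (((c.K R).card : ℝ) * ((R / c.g) ^ c.s)) := by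
    rwa [ENNReal.ofReal_mul (by positivity), ENNReal.ofReal_natCast]
  exact ENNReal.one_le_ofReal.1 h2

lemma cth_subset {R : ℝ} (hR0 : 0 < R) (hR1 : R ≤ 1) :
    Metric.cthickening R c.F ⊆ ⋃ k ∈ c.K R, Icc ((k:ℝ) * R - 2*R) ((k:ℝ) * R + R) := by
  rw [c.hF.cthickening_eq_biUnion_closedBall hR0.le]
  intro y hy
  simp only [Set.mem_iUnion] at hy
  obtain ⟨x, hxF, hyx⟩ := hy
  obtain ⟨k, hk, hmem⟩ := c.cover hR0 hR1 hxF
  rw [Real.closedBall_eq_Icc] at hyx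
  apply Set.mem_biUnion hk
  obtain ⟨h1, h2⟩ := hmem
  exact ⟨by linarith [hyx.1], by linarith [hyx.2]⟩

lemma cth_superset {R : ℝ} (hR0 : 0 < R) (hR1 : R ≤ 1) :
    (⋃ k ∈ c.K R, Ioc ((k:ℝ) * R - R) ((k:ℝ) * R)) ⊆ Metric.cthickening R c.F := by
  rw [c.hF.cthickening_eq_biUnion_closedBall hR0.le]
  intro y hy
  simp only [Set.mem_iUnion] at hy ⊢
  obtain ⟨k, hk, hyk⟩ := hy
  obtain ⟨x, hxF, hmem⟩ := (Finset.mem_filter.1 hk).2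
  refine ⟨x, hxF, ?_⟩
  rw [Real.closedBall_eq_Icc]
  obtain ⟨h1, h2⟩ := hmem
  exact ⟨by linarith [hyk.1, hyk.2], by linarith [hyk.1, hyk.2]⟩

lemma vol_le {R : ℝ} (hR0 : 0 < R) (hR1 : R ≤ 1) :
    volume (Metric.cthickening R c.F) ≤ ((c.K R).card : ℝ≥0∞) * ENNReal.ofReal (3*R) := by
  calc volume (Metric.cthickening R c.F)
      ≤ volume (⋃ k ∈ c.K R, Icc ((k:ℝ) * R - 2*R) ((k:ℝ) * R + R)) :=
        measure_mono (c.cth_subset hR0 hR1)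
    _ ≤ ∑ k ∈ c.K R, volume (Icc ((k:ℝ) * R - 2*R) ((k:ℝ) * R + R)) :=
        measure_biUnion_finset_le _ _
    _ = ∑ _k ∈ c.K R, ENNReal.ofReal (3*R) := by
        apply Finset.sum_congr rfl
        intro k _
        rw [Real.volume_Icc]
        ring_nf
    _ = ((c.K R).card : ℝ≥0∞) * ENNReal.ofReal (3*R) := by
        rw [Finset.sum_const, nsmul_eq_mul]

lemma vol_ge {R : ℝ} (hR0 : 0 < R) (hR1 : R ≤ 1) :
    ((c.K R).card : ℝ≥0∞) * ENNReal.ofReal R ≤ volume (Metric.cthickening R c.F) := by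
  have hdisj : ((c.K R : Finset ℕ) : Set ℕ).PairwiseDisjoint
      (fun k : ℕ => Ioc ((k:ℝ) * R - R) ((k:ℝ) * R)) := by
    intro a _ b _ hab
    have := cells_disjoint hR0 (z := (a:ℤ)) (z' := (b:ℤ)) (by exact_mod_cast hab)
    simpa using this
  calc ((c.K R).card : ℝ≥0∞) * ENNReal.ofReal R
      = ∑ k ∈ c.K R, volume (Ioc ((k:ℝ) * R - R) ((k:ℝ) * R)) := by
        have : ∀ k ∈ c.K R, volume (Ioc ((k:ℝ) * R - R) ((k:ℝ) * R)) = ENNReal.ofReal R := by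
          intro k _
          rw [Real.volume_Ioc]
          ring_nf
        rw [Finset.sum_congr rfl this, Finset.sum_const, nsmul_eq_mul]
    _ = volume (⋃ k ∈ c.K R, Ioc ((k:ℝ) * R - R) ((k:ℝ) * R)) :=
        (measure_biUnion_finset hdisj (fun k _ => measurableSet_Ioc)).symm
    _ ≤ volume (Metric.cthickening R c.F) := measure_mono (c.cth_superset hR0 hR1)


/-! ### The main conclusions -/

lemma dimH_le' : dimH c.F ≤ ENNReal.ofReal c.s := by
  set Rn : ℕ → ℝ := fun n => 1 / ((n:ℝ) + 1) with hRn
  have hRn0 : ∀ n, 0 < Rn n := fun n => by positivity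
  have hRn1 : ∀ n, Rn n ≤ 1 := fun n => by
    rw [hRn]
    rw [div_le_one (by positivity)]
    simp
  have hmain : μH[c.s] c.F ≤ ENNReal.ofReal (3 / c.eps ^ c.s) := by
    have hcov := MeasureTheory.Measure.hausdorffMeasure_le_liminf_sum
      (ι := fun n : ℕ => {k // k ∈ c.K (Rn n)}) c.s c.F
      (fun n => ENNReal.ofReal (Rn n))
      (by
        have : Tendsto Rn atTop (nhds 0) := tendsto_one_div_add_atTop_nhds_zero_nat
        simpa using (ENNReal.tendsto_ofReal this))
      (fun n k => cellI (Rn n) k.1)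
      (by
        filter_upwards with n
        intro k
        rw [cellI, Real.ediam_Icc]
        apply ENNReal.ofReal_le_ofReal
        ring_nf
        exact le_rfl)
      (by
        filter_upwards with n
        intro x hx
        obtain ⟨k, hk, hmem⟩ := c.cover (hRn0 n) (hRn1 n) hx
        exact Set.mem_iUnion.2 ⟨⟨k, hk⟩, hmem⟩)
    refine hcov.trans ?_
    have hbound : ∀ n : ℕ, (∑ k : {k // k ∈ c.K (Rn n)}, Metric.ediam (cellI (Rn n) k.1) ^ c.s)
        ≤ ENNReal.ofReal (3 / c.eps ^ c.s) := by
      intro n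
      have hR0 := hRn0 n
      have hdiam : ∀ k : {k // k ∈ c.K (Rn n)},
          Metric.ediam (cellI (Rn n) k.1) ^ c.s = ENNReal.ofReal ((Rn n) ^ c.s) := by
        intro k
        rw [cellI, Real.ediam_Icc]
        have : (k.1:ℝ) * Rn n - ((k.1:ℝ) * Rn n - Rn n) = Rn n := by ring
        rw [this, ENNReal.ofReal_rpow_of_pos hR0]
      rw [Finset.sum_congr rfl (fun k _ => hdiam k), Finset.sum_const]
      rw [Finset.card_univ, Fintype.card_coe, nsmul_eq_mul]
      rw [← ENNReal.ofReal_natCast, ← ENNReal.ofReal_mul (by positivity)]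
      apply ENNReal.ofReal_le_ofReal
      have hcl := c.card_le hR0 (hRn1 n)
      have he : (0:ℝ) < c.eps ^ c.s := Real.rpow_pos_of_pos c.eps_pos _
      rw [le_div_iff₀ he]
      nlinarith
    calc Filter.liminf
          (fun n => ∑ k : {k // k ∈ c.K (Rn n)}, Metric.ediam (cellI (Rn n) k.1) ^ c.s) atTop
        ≤ Filter.liminf (fun _ : ℕ => ENNReal.ofReal (3 / c.eps ^ c.s)) atTop :=
          Filter.liminf_le_liminf (Eventually.of_forall hbound)
      _ = ENNReal.ofReal (3 / c.eps ^ c.s) := Filter.liminf_const _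
  have hne : μH[(c.s.toNNReal : ℝ)] c.F ≠ ⊤ := by
    rw [Real.coe_toNNReal _ c.hs.le]
    exact ne_top_of_le_ne_top ENNReal.ofReal_ne_top hmain
  exact dimH_le_of_hausdorffMeasure_ne_top hne

lemma dimH_ge' : ENNReal.ofReal c.s ≤ dimH c.F := by
  set C : ℝ≥0∞ := ENNReal.ofReal ((2 / c.g) ^ c.s) with hC
  have hCpos : C ≠ 0 := by
    rw [hC, Ne, ENNReal.ofReal_eq_zero, not_le]
    exact Real.rpow_pos_of_pos (div_pos two_pos c.g_pos) _
  have hCtop : C ≠ ⊤ := ENNReal.ofReal_ne_top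
  set ν : Measure ℝ := C⁻¹ • c.mu with hν
  have key : ∀ A : Set ℝ, Metric.ediam A ≤ 1 → ν A ≤ Metric.ediam A ^ c.s := by
    intro A hA
    rcases Set.eq_empty_or_nonempty A with rfl | ⟨a, ha⟩
    · simp
    have hdne : Metric.ediam A ≠ ⊤ := ne_top_of_le_ne_top ENNReal.one_ne_top hA
    set d' : ℝ := (Metric.ediam A).toReal with hd'
    have hd'0 : 0 ≤ d' := ENNReal.toReal_nonneg
    have hsub : A ⊆ Icc (a - d') (a + d') := by
      intro y hy
      have := Metric.dist_le_diam_of_mem (Metric.isBounded_iff_ediam_ne_top.2 hdne) hy ha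
      rw [Metric.diam, ← hd'] at this
      rw [Real.dist_eq] at this
      constructor <;> [linarith [abs_le.1 this]; linarith [(abs_le.1 this).2]]
    have h1 : ν A ≤ C⁻¹ * ENNReal.ofReal ((2 * d' / c.g) ^ c.s) := by
      rw [hν, Measure.smul_apply, smul_eq_mul]
      apply mul_le_mul_right
      calc c.mu A ≤ c.mu (Icc (a - d') (a + d')) := measure_mono hsub
        _ = ENNReal.ofReal (c.f (a + d') - c.f (a - d')) := c.mu_Icc _ _
        _ ≤ ENNReal.ofReal ((2 * d' / c.g) ^ c.s) := by
            apply ENNReal.ofReal_le_ofReal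
            have := c.holder (by linarith : a - d' ≤ a + d')
            have harg : a + d' - (a - d') = 2 * d' := by ring
            rwa [harg] at this
    have h2 : (2 * d' / c.g) ^ c.s = (2 / c.g) ^ c.s * d' ^ c.s := by
      rw [← Real.mul_rpow (div_pos two_pos c.g_pos).le hd'0]
      ring_nf
    have h3 : C⁻¹ * ENNReal.ofReal ((2 * d' / c.g) ^ c.s) = ENNReal.ofReal (d' ^ c.s) := by
      rw [h2, ENNReal.ofReal_mul (Real.rpow_pos_of_pos (div_pos two_pos c.g_pos) _).le, ← hC, ← mul_assoc,
        ENNReal.inv_mul_cancel hCpos hCtop, one_mul]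
    rw [h3] at h1
    refine h1.trans ?_
    rcases eq_or_lt_of_le (zero_le : 0 ≤ Metric.ediam A) with hd0 | hd0
    · have : d' = 0 := by rw [hd', ← hd0]; rfl
      rw [this, Real.zero_rpow c.hs.ne', ENNReal.ofReal_zero]
      exact zero_le
    · have hd'pos : 0 < d' := ENNReal.toReal_pos hd0.ne' hdne
      rw [← ENNReal.ofReal_rpow_of_pos hd'pos, hd', ENNReal.ofReal_toReal hdne]
  have hle : ν ≤ μH[c.s] :=
    MeasureTheory.Measure.le_hausdorffMeasure c.s ν 1 one_pos (fun A hA => key A hA)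
  have hμH : μH[c.s] c.F ≠ 0 := by
    have : ν c.F ≤ μH[c.s] c.F := hle c.F
    have hν1 : ν c.F = C⁻¹ := by
      rw [hν, Measure.smul_apply, smul_eq_mul, c.mu_F, mul_one]
    rw [hν1] at this
    intro hcon
    rw [hcon, le_zero_iff, ENNReal.inv_eq_zero] at this
    exact hCtop this
  have h4 : ((c.s.toNNReal : ℝ≥0) : ℝ≥0∞) ≤ dimH c.F := by
    apply le_dimH_of_hausdorffMeasure_ne_zero
    show μH[((c.s.toNNReal : ℝ≥0) : ℝ)] c.F ≠ 0
    rwa [Real.coe_toNNReal _ c.hs.le]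
  exact h4


/-! ### Volume estimates and the Minkowski-dimension limit -/

lemma volR_le {R : ℝ} (hR0 : 0 < R) (hR1 : R ≤ 1) :
    (volume (Metric.cthickening R c.F)).toReal ≤ 9 / c.eps ^ c.s * R ^ (1 - c.s) := by
  have he : (0:ℝ) < c.eps ^ c.s := Real.rpow_pos_of_pos c.eps_pos _
  have hRs : (0:ℝ) < R ^ c.s := Real.rpow_pos_of_pos hR0 _
  have hcard : ((c.K R).card : ℝ) ≤ 3 / (c.eps ^ c.s * R ^ c.s) := by
    rw [le_div_iff₀ (by positivity)]
    exact c.card_le hR0 hR1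
  have hreal : ((c.K R).card : ℝ) * (3 * R) ≤ 9 / c.eps ^ c.s * R ^ (1 - c.s) := by
    have hrw : R ^ (1 - c.s) = R / R ^ c.s := by
      rw [Real.rpow_sub hR0, Real.rpow_one]
    rw [hrw]
    calc ((c.K R).card : ℝ) * (3 * R)
        ≤ 3 / (c.eps ^ c.s * R ^ c.s) * (3 * R) :=
          mul_le_mul_of_nonneg_right hcard (by positivity)
      _ = 9 / c.eps ^ c.s * (R / R ^ c.s) := by field_simp; ring
  apply ENNReal.toReal_le_of_le_ofReal
  · positivity
  calc volume (Metric.cthickening R c.F)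
      ≤ ((c.K R).card : ℝ≥0∞) * ENNReal.ofReal (3*R) := c.vol_le hR0 hR1
    _ = ENNReal.ofReal (((c.K R).card : ℝ) * (3*R)) := by
        rw [← ENNReal.ofReal_natCast (c.K R).card, ← ENNReal.ofReal_mul (by positivity)]
    _ ≤ _ := ENNReal.ofReal_le_ofReal hreal

lemma vol_ne_top {R : ℝ} (hR0 : 0 < R) (hR1 : R ≤ 1) :
    volume (Metric.cthickening R c.F) ≠ ⊤ := by
  apply ne_top_of_le_ne_top (b := ((c.K R).card : ℝ≥0∞) * ENNReal.ofReal (3*R))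
  · exact ENNReal.mul_ne_top (ENNReal.natCast_ne_top _) ENNReal.ofReal_ne_top
  · exact c.vol_le hR0 hR1

lemma volR_ge {R : ℝ} (hR0 : 0 < R) (hR1 : R ≤ 1) :
    c.g ^ c.s * R ^ (1 - c.s) ≤ (volume (Metric.cthickening R c.F)).toReal := by
  have hgs : (0:ℝ) < c.g ^ c.s := Real.rpow_pos_of_pos c.g_pos _
  have hRs : (0:ℝ) < R ^ c.s := Real.rpow_pos_of_pos hR0 _
  have hcard : c.g ^ c.s / R ^ c.s ≤ ((c.K R).card : ℝ) := by
    have h1 := c.card_ge hR0 hR1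
    have h2 : (R / c.g) ^ c.s = R ^ c.s / c.g ^ c.s := Real.div_rpow hR0.le c.g_pos.le c.s
    rw [h2] at h1
    rw [div_le_iff₀ hRs]
    have h3 : (0:ℝ) < R ^ c.s / c.g ^ c.s := by positivity
    calc c.g ^ c.s = 1 * c.g ^ c.s := (one_mul _).symm
      _ ≤ (((c.K R).card : ℝ) * (R ^ c.s / c.g ^ c.s)) * c.g ^ c.s := by
          apply mul_le_mul_of_nonneg_right h1 hgs.le
      _ = ((c.K R).card : ℝ) * R ^ c.s := by field_simp
  have hreal : c.g ^ c.s * R ^ (1 - c.s) ≤ ((c.K R).card : ℝ) * R := by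
    have hrw : R ^ (1 - c.s) = R / R ^ c.s := by
      rw [Real.rpow_sub hR0, Real.rpow_one]
    rw [hrw]
    calc c.g ^ c.s * (R / R ^ c.s) = c.g ^ c.s / R ^ c.s * R := by ring
      _ ≤ ((c.K R).card : ℝ) * R := mul_le_mul_of_nonneg_right hcard hR0.le
  rw [← ENNReal.ofReal_le_iff_le_toReal (c.vol_ne_top hR0 hR1)]
  calc ENNReal.ofReal (c.g ^ c.s * R ^ (1 - c.s))
      ≤ ENNReal.ofReal (((c.K R).card : ℝ) * R) := ENNReal.ofReal_le_ofReal hreal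
    _ = ((c.K R).card : ℝ≥0∞) * ENNReal.ofReal R := by
        rw [ENNReal.ofReal_mul (by positivity), ENNReal.ofReal_natCast]
    _ ≤ volume (Metric.cthickening R c.F) := c.vol_ge hR0 hR1

lemma const_div_log_tendsto (a : ℝ) :
    Tendsto (fun R : ℝ => a / Real.log R) (nhdsWithin 0 (Set.Ioi 0)) (nhds 0) := by
  have h1 : Tendsto (fun R : ℝ => Real.log R) (nhdsWithin 0 (Set.Ioi 0)) atBot :=
    Real.tendsto_log_nhdsGT_zero
  have h2 : Tendsto (fun R : ℝ => -Real.log R) (nhdsWithin 0 (Set.Ioi 0)) atTop :=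
    tendsto_neg_atBot_atTop.comp h1
  have h3 : Tendsto (fun R : ℝ => (-Real.log R)⁻¹) (nhdsWithin 0 (Set.Ioi 0)) (nhds 0) :=
    h2.inv_tendsto_atTop
  have h4 : Tendsto (fun R : ℝ => -a * (-Real.log R)⁻¹) (nhdsWithin 0 (Set.Ioi 0))
      (nhds (-a * 0)) := h3.const_mul _
  rw [mul_zero] at h4
  apply h4.congr
  intro R
  rw [← neg_inv, div_eq_mul_inv]
  ring

lemma tendsto_log_vol :
    Tendsto (fun R : ℝ =>
        Real.log ((volume (Metric.cthickening R c.F)).toReal) / Real.log R)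
      (nhdsWithin 0 (Set.Ioi 0)) (nhds (1 - c.s)) := by
  set A : ℝ := 9 / c.eps ^ c.s with hA
  set B : ℝ := c.g ^ c.s with hB
  have hApos : 0 < A := by
    rw [hA]
    exact div_pos (by norm_num) (Real.rpow_pos_of_pos c.eps_pos _)
  have hBpos : 0 < B := Real.rpow_pos_of_pos c.g_pos _
  have hlo : Tendsto (fun R : ℝ => (1 - c.s) + Real.log A / Real.log R)
      (nhdsWithin 0 (Set.Ioi 0)) (nhds (1 - c.s)) := by
    have := (const_div_log_tendsto (Real.log A)).const_add (1 - c.s)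
    simpa using this
  have hhi : Tendsto (fun R : ℝ => (1 - c.s) + Real.log B / Real.log R)
      (nhdsWithin 0 (Set.Ioi 0)) (nhds (1 - c.s)) := by
    have := (const_div_log_tendsto (Real.log B)).const_add (1 - c.s)
    simpa using this
  have hev : ∀ᶠ R in nhdsWithin (0:ℝ) (Set.Ioi 0), R ∈ Set.Ioo (0:ℝ) 1 :=
    Ioo_mem_nhdsGT_of_mem ⟨le_refl 0, one_pos⟩
  apply tendsto_of_tendsto_of_tendsto_of_le_of_le' hlo hhi
  · filter_upwards [hev] with R hR
    obtain ⟨hR0, hR1⟩ := hR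
    have hlogR : Real.log R < 0 := Real.log_neg hR0 hR1
    set V : ℝ := (volume (Metric.cthickening R c.F)).toReal with hV
    have hVge := c.volR_ge hR0 hR1.le
    have hVle := c.volR_le hR0 hR1.le
    have hRpow : (0:ℝ) < R ^ (1 - c.s) := Real.rpow_pos_of_pos hR0 _
    have hVpos : 0 < V := lt_of_lt_of_le (by positivity) hVge
    have hlogle : Real.log V ≤ Real.log A + (1 - c.s) * Real.log R := by
      calc Real.log V ≤ Real.log (A * R ^ (1 - c.s)) := Real.log_le_log hVpos hVle
        _ = Real.log A + (1 - c.s) * Real.log R := by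
            rw [Real.log_mul hApos.ne' hRpow.ne', Real.log_rpow hR0]
    have key : (Real.log A + (1 - c.s) * Real.log R) / Real.log R ≤ Real.log V / Real.log R :=
      (div_le_div_right_of_neg hlogR).2 hlogle
    have expand : (Real.log A + (1 - c.s) * Real.log R) / Real.log R
        = (1 - c.s) + Real.log A / Real.log R := by
      rw [add_div, mul_div_assoc, div_self hlogR.ne, mul_one, add_comm]
    rw [expand] at key
    exact key
  · filter_upwards [hev] with R hR
    obtain ⟨hR0, hR1⟩ := hR
    have hlogR : Real.log R < 0 := Real.log_neg hR0 hR1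
    set V : ℝ := (volume (Metric.cthickening R c.F)).toReal with hV
    have hVge := c.volR_ge hR0 hR1.le
    have hRpow : (0:ℝ) < R ^ (1 - c.s) := Real.rpow_pos_of_pos hR0 _
    have hlogge : Real.log B + (1 - c.s) * Real.log R ≤ Real.log V := by
      calc Real.log B + (1 - c.s) * Real.log R
          = Real.log (B * R ^ (1 - c.s)) := by
            rw [Real.log_mul hBpos.ne' hRpow.ne', Real.log_rpow hR0]
        _ ≤ Real.log V := Real.log_le_log (by positivity) hVge
    have key : Real.log V / Real.log R ≤ (Real.log B + (1 - c.s) * Real.log R) / Real.log R :=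
      (div_le_div_right_of_neg hlogR).2 hlogge
    have expand : (Real.log B + (1 - c.s) * Real.log R) / Real.log R
        = (1 - c.s) + Real.log B / Real.log R := by
      rw [add_div, mul_div_assoc, div_self hlogR.ne, mul_one, add_comm]
    rw [expand] at key
    exact key

end Cfg
end Moran

/-- for a self-similar subset of `[0,1]` with disjoint ordered pieces,
the Hausdorff dimension equals the similarity dimension `s` (`Σ rᵢ^s = 1`), and
`lim_{r→0⁺} log L(F_r)/log r = 1 - s`, so the Minkowski dimension is also `s`. -/
theorem stmt_2 (m : ℕ) (hm : 2 ≤ m) (ψ : ℕ → ℝ → ℝ) (ratio : ℕ → ℝ)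
    (hratio : ∀ i, i < m → 0 < ratio i ∧ ratio i < 1)
    (hsim : ∀ i, i < m → ∀ x y : ℝ, |ψ i x - ψ i y| = ratio i * |x - y|)
    (hsub : ∀ i, i < m → ψ i '' Set.Icc 0 1 ⊆ Set.Icc 0 1)
    (hord : ∀ i, i < m → ψ i 0 < ψ i 1)
    (hgap : ∀ i, i + 1 < m → ψ i 1 < ψ (i + 1) 0)
    (h0 : ψ 0 0 = 0) (h1 : ψ (m - 1) 1 = 1)
    (F : Set ℝ) (hFc : IsCompact F) (hFne : F.Nonempty)
    (hFattr : F = ⋃ i ∈ Finset.range m, ψ i '' F)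
    (s : ℝ) (hs : 0 < s) (hsum : ∑ i ∈ Finset.range m, ratio i ^ s = 1) :
    dimH F = ENNReal.ofReal s ∧
    Filter.Tendsto
      (fun R : ℝ =>
        Real.log ((MeasureTheory.volume (Metric.cthickening R F)).toReal) / Real.log R)
      (nhdsWithin 0 (Set.Ioi 0)) (nhds (1 - s)) := by
  classical
  have haff : ∀ i, i < m → ∀ x : ℝ, ψ i x = ψ i 0 + ratio i * x := by
    intro i hi x
    obtain ⟨hr0, hr1⟩ := hratio i hi
    have h10 : ψ i 1 - ψ i 0 = ratio i := by
      have h := hsim i hi 1 0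
      rw [abs_of_pos (sub_pos.2 (hord i hi))] at h
      simpa using h
    have he : ψ i 1 = ψ i 0 + ratio i := by linarith
    have sq0 : (ψ i x - ψ i 0)^2 = ratio i ^2 * x^2 := by
      have h := congrArg (fun t : ℝ => t^2) (hsim i hi x 0)
      simpa [sq_abs, mul_pow] using h
    have sq1 : (ψ i x - ψ i 1)^2 = ratio i ^2 * (x-1)^2 := by
      have h := congrArg (fun t : ℝ => t^2) (hsim i hi x 1)
      simpa [sq_abs, mul_pow] using h
    rw [he] at sq1
    have hz : ratio i * (ψ i x - ψ i 0 - ratio i * x) = 0 := by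
      linear_combination (sq0 - sq1) / 2
    rcases mul_eq_zero.1 hz with h | h
    · exact absurd h hr0.ne'
    · linarith
  have hmem0 : ∀ i, i < m → ψ i 0 ∈ Set.Icc (0:ℝ) 1 := by
    intro i hi
    exact hsub i hi ⟨0, ⟨le_rfl, zero_le_one⟩, rfl⟩
  have hmem1 : ∀ i, i < m → ψ i 1 ∈ Set.Icc (0:ℝ) 1 := by
    intro i hi
    exact hsub i hi ⟨1, ⟨zero_le_one, le_rfl⟩, rfl⟩
  let c : Moran.Cfg :=
    { m := m
      hm := hm
      b := fun i => ψ i 0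
      r := ratio
      s := s
      F := F
      hr0 := fun i hi => (hratio i hi).1
      hr1 := fun i hi => (hratio i hi).2
      hb0 := fun i hi => (hmem0 i hi).1
      hb1 := fun i hi => by
        have h1 := (hmem1 i hi).2
        have h2 := haff i hi 1
        rw [mul_one] at h2
        linarith
      hgap := fun i hi => by
        have h1 := hgap i hi
        have h2 := haff i (by omega) 1
        rw [mul_one] at h2
        linarith
      hs := hs
      hsum := hsum
      hF := hFc
      hFne := hFne
      hFattr := by
        conv_lhs => rw [hFattr]
        apply Set.iUnion_congr
        intro i
        apply Set.iUnion_congr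
        intro hi
        rw [show ψ i = (fun x => ψ i 0 + ratio i * x)
          from funext (haff i (Finset.mem_range.1 hi))]
        simp only [mul_zero, add_zero] }
  constructor
  · exact le_antisymm c.dimH_le' c.dimH_ge'
  · exact c.tendsto_log_vol
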